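/- One has Σ B₂(⟨a⟩) = 0, where the sum runs over all pairs (a, b) ∈ (ℤ/p^kℤ)² such that a² − εb² is a unit of ℤ/p^kℤ; equivalently, the Stickelberger element θ has degree 0: deg θ = 0. -/

import Mathlib

open scoped Classical

/-- `H = (ℤ/nℤ)ˣ/{±1}`. -/
abbrev Hgrp (n : ℕ) : Type := (ZMod n)ˣ ⧸ Subgroup.zpowers (-1 : (ZMod n)ˣ)

/-- The rational group algebra `ℚ[H]`. -/
abbrev QH (n : ℕ) : Type := MonoidAlgebra ℚ (Hgrp n)

/-- `deg : ℚ[H] → ℚ`, the ℚ-algebra map sending every element of `H` to `1`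
(so `deg` of an element is the sum of its coefficients). -/
noncomputable def deg (n : ℕ) : QH n →ₐ[ℚ] ℚ := MonoidAlgebra.lift ℚ ℚ (Hgrp n) 1

/-- `R ⊆ ℚ[H]`: the elements all of whose coefficients are integers, as an additive subgroup. -/
def Rgrp (n : ℕ) : AddSubgroup (QH n) where
  carrier := {x | ∀ h : Hgrp n, ∃ m : ℤ, x.coeff h = (m : ℚ)}
  zero_mem' := fun h => ⟨0, by simp⟩
  add_mem' := by
    intro x y hx hy h
    obtain ⟨a, ha⟩ := hx h
    obtain ⟨b, hb⟩ := hy h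
    refine ⟨a + b, ?_⟩
    show (x + y).coeff h = ((a + b : ℤ) : ℚ)
    rw [MonoidAlgebra.coeff_add, Finsupp.add_apply, ha, hb]
    push_cast
    ring
  neg_mem' := by
    intro x hx h
    obtain ⟨a, ha⟩ := hx h
    refine ⟨-a, ?_⟩
    show (-x).coeff h = ((-a : ℤ) : ℚ)
    rw [MonoidAlgebra.coeff_neg, Finsupp.neg_apply, ha]
    push_cast
    ring

/-- `R_m`: the elements of `R` whose degree is divisible by `m`. -/
noncomputable def RgrpDeg (n : ℕ) (m : ℕ) : AddSubgroup (QH n) where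
  carrier := {x | x ∈ Rgrp n ∧ ∃ c : ℤ, deg n x = (m : ℚ) * c}
  zero_mem' := ⟨(Rgrp n).zero_mem, 0, by simp⟩
  add_mem' := by
    rintro x y ⟨hx, cx, hcx⟩ ⟨hy, cy, hcy⟩
    refine ⟨(Rgrp n).add_mem hx hy, cx + cy, ?_⟩
    rw [map_add, hcx, hcy]
    push_cast
    ring
  neg_mem' := by
    rintro x ⟨hx, cx, hcx⟩
    refine ⟨(Rgrp n).neg_mem hx, -cx, ?_⟩
    rw [map_neg, hcx]
    push_cast
    ring

/-- `R₀`: the degree-zero elements of `R`. -/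
noncomputable def R0grp (n : ℕ) : AddSubgroup (QH n) where
  carrier := {x | x ∈ Rgrp n ∧ deg n x = 0}
  zero_mem' := ⟨(Rgrp n).zero_mem, map_zero _⟩
  add_mem' := by
    rintro x y ⟨hx, dx⟩ ⟨hy, dy⟩
    exact ⟨(Rgrp n).add_mem hx hy, by rw [map_add, dx, dy, add_zero]⟩
  neg_mem' := by
    rintro x ⟨hx, dx⟩
    exact ⟨(Rgrp n).neg_mem hx, by rw [map_neg, dx, neg_zero]⟩

/-- `N = Σ_{h ∈ H} h ∈ ℚ[H]`. -/
noncomputable def Nelt (n : ℕ) [NeZero n] : QH n :=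
  letI : Fintype (Hgrp n) := Fintype.ofFinite _
  ∑ h : Hgrp n, MonoidAlgebra.single h (1 : ℚ)

/-- The second Bernoulli polynomial `B₂(t) = t² − t + 1/6`. -/
def B2 (t : ℚ) : ℚ := t ^ 2 - t + 1 / 6

/-- `⟨a⟩ = ã/n ∈ [0,1)` for `a ∈ ℤ/nℤ` with representative `ã ∈ {0, …, n−1}`. -/
def fracPart (n : ℕ) (a : ZMod n) : ℚ := (a.val : ℚ) / n

/-- The class in `H` of a unit of `ℤ/nℤ`. -/
noncomputable def cls (n : ℕ) (u : (ZMod n)ˣ) : Hgrp n := QuotientGroup.mk u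

/-- The Stickelberger element
`θ = (n/4)·Σ_{(a,b) ∈ (ℤ/nℤ)², a²−εb² invertible} B₂(⟨a⟩)·[a²−εb²]⁻¹ ∈ ℚ[H]`. -/
noncomputable def theta (n : ℕ) (ε : ℤ) [NeZero n] : QH n :=
  ((n : ℚ) / 4) • ∑ v : ZMod n × ZMod n, ∑ u : (ZMod n)ˣ,
    if (u : ZMod n) = v.1 ^ 2 - (ε : ZMod n) * v.2 ^ 2 then
      MonoidAlgebra.single ((cls n u)⁻¹) (B2 (fracPart n v.1)) else 0

/-- `θ' = θ − ((p+1)p^(2k−1)/12)·N`. -/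
noncomputable def theta' (p k : ℕ) (ε : ℤ) [NeZero (p ^ k)] : QH (p ^ k) :=
  theta (p ^ k) ε - ((((p : ℚ) + 1) * (p : ℚ) ^ (2 * k - 1)) / 12) • Nelt (p ^ k)

/-- `d = 12/gcd(12, p+1)`. -/
def dConst (p : ℕ) : ℕ := 12 / Nat.gcd 12 (p + 1)


section Helpers

private lemma sum_range_cast_sq (m : ℕ) :
    ∑ i ∈ Finset.range m, (i : ℚ) ^ 2 = (m : ℚ) * (m - 1) * (2 * m - 1) / 6 := by
  induction m with
  | zero => simp
  | succ n ih => rw [Finset.sum_range_succ, ih]; push_cast; ring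

private lemma sum_range_cast_id (m : ℕ) :
    ∑ i ∈ Finset.range m, (i : ℚ) = (m : ℚ) * (m - 1) / 2 := by
  induction m with
  | zero => simp
  | succ n ih => rw [Finset.sum_range_succ, ih]; push_cast; ring

private lemma sum_B2_range (m : ℕ) (hm : m ≠ 0) :
    ∑ i ∈ Finset.range m, B2 ((i : ℚ) / m) = 1 / (6 * m) := by
  have hm' : (m : ℚ) ≠ 0 := Nat.cast_ne_zero.mpr hm
  have h : ∀ i ∈ Finset.range m,
      B2 ((i : ℚ) / m) = (i:ℚ)^2 / (m:ℚ)^2 - (i:ℚ)/m + 1/6 := by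
    intro i _; simp [B2, div_pow]
  rw [Finset.sum_congr rfl h, Finset.sum_add_distrib, Finset.sum_sub_distrib,
    ← Finset.sum_div, ← Finset.sum_div, sum_range_cast_sq, sum_range_cast_id,
    Finset.sum_const, Finset.card_range]
  field_simp
  ring

private lemma zmod_sum_eq (n : ℕ) [NeZero n] (f : ℕ → ℚ) :
    ∑ a : ZMod n, f a.val = ∑ i ∈ Finset.range n, f i := by
  refine Finset.sum_nbij' (fun a => a.val) (fun i => (i : ZMod n)) ?_ ?_ ?_ ?_ ?_
  · intro a _; exact Finset.mem_range.mpr a.val_lt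
  · intro i _; exact Finset.mem_univ _
  · intro a _; exact ZMod.natCast_zmod_val a
  · intro i hi; exact ZMod.val_natCast_of_lt (Finset.mem_range.mp hi)
  · intro a _; rfl

private lemma sum_dvd_filter (p m : ℕ) (hp : 0 < p) (f : ℕ → ℚ) :
    ∑ i ∈ Finset.range (p * m), (if p ∣ i then f i else 0)
      = ∑ c ∈ Finset.range m, f (p * c) := by
  rw [← Finset.sum_filter]
  refine Finset.sum_nbij' (fun i => i / p) (fun c => p * c) ?_ ?_ ?_ ?_ ?_
  · intro i hi
    simp only [Finset.mem_filter, Finset.mem_range] at hi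
    obtain ⟨hlt, -⟩ := hi
    exact Finset.mem_range.mpr (Nat.div_lt_of_lt_mul hlt)
  · intro c hc
    simp only [Finset.mem_filter, Finset.mem_range]
    exact ⟨(mul_lt_mul_iff_right₀ hp).mpr (Finset.mem_range.mp hc), Dvd.intro c rfl⟩
  · intro i hi
    simp only [Finset.mem_filter] at hi
    exact Nat.mul_div_cancel' hi.2
  · intro c _
    exact Nat.mul_div_cancel_left c hp
  · intro i hi
    simp only [Finset.mem_filter] at hi
    rw [Nat.mul_div_cancel' hi.2]

private lemma unit_iff_aux (p k : ℕ) [Fact p.Prime] (hk : 1 ≤ k) (ε : ℤ)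
    (hε : ¬ IsSquare (ε : ZMod p)) (a b : ZMod (p ^ k)) :
    IsUnit (a ^ 2 - (ε : ZMod (p ^ k)) * b ^ 2) ↔ ¬(p ∣ a.val ∧ p ∣ b.val) := by
  have hp : p.Prime := Fact.out
  haveI : NeZero (p ^ k) := ⟨pow_ne_zero k hp.ne_zero⟩
  have hdvd : p ∣ p ^ k := dvd_pow_self p (by omega)
  set φ : ZMod (p ^ k) →+* ZMod p := ZMod.castHom hdvd (ZMod p) with hφ
  -- unit criterion for a single element
  have hu : ∀ x : ZMod (p ^ k), IsUnit x ↔ ¬ p ∣ x.val := by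
    intro x
    conv_lhs => rw [← ZMod.natCast_zmod_val x]
    rw [ZMod.isUnit_iff_coprime]
    rw [Nat.coprime_pow_right_iff (by omega), Nat.coprime_comm,
      Nat.Prime.coprime_iff_not_dvd hp]
  have hphi : ∀ x : ZMod (p ^ k), φ x = 0 ↔ p ∣ x.val := by
    intro x
    conv_lhs => rw [← ZMod.natCast_zmod_val x]
    rw [map_natCast, ZMod.natCast_eq_zero_iff]
  -- field lemma
  have field_lem : ∀ A B : ZMod p, A ^ 2 - (ε : ZMod p) * B ^ 2 = 0 ↔ (A = 0 ∧ B = 0) := by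
    intro A B
    constructor
    · intro h
      have hA2 : A ^ 2 = (ε : ZMod p) * B ^ 2 := by linear_combination h
      by_cases hB : B = 0
      · subst hB
        simp only [and_true]
        have : A ^ 2 = 0 := by rw [hA2]; ring
        exact sq_eq_zero_iff.mp this
      · exfalso
        refine hε ⟨A * B⁻¹, ?_⟩
        have : (A * B⁻¹) * (A * B⁻¹) = (ε : ZMod p) := by
          field_simp
          linear_combination hA2
        exact this.symm
    · rintro ⟨rfl, rfl⟩; ring
  rw [hu, not_and_or, ← hphi, ← hphi]
  have : φ (a ^ 2 - (ε : ZMod (p ^ k)) * b ^ 2) = (φ a) ^ 2 - (ε : ZMod p) * (φ b) ^ 2 := by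
    push_cast [map_sub, map_mul, map_pow, map_intCast]
    ring
  rw [← hphi, this, not_iff_comm, not_or, not_not, not_not, field_lem]

end Helpers

/-- `Σ B₂(⟨a⟩) = 0`, the sum running over pairs `(a,b) ∈ (ℤ/p^kℤ)²` with `a² − εb²` a unit;
equivalently, the Stickelberger element `θ` has degree `0`. -/
theorem sum_B2_eq_zero_and_deg_theta (p k : ℕ) [Fact p.Prime] (hp5 : 5 ≤ p) (hk : 1 ≤ k)
    (ε : ℤ) (hε : ¬ IsSquare (ε : ZMod p)) :
    (∑ v ∈ Finset.univ.filter (fun v : ZMod (p ^ k) × ZMod (p ^ k) =>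
        IsUnit (v.1 ^ 2 - (ε : ZMod (p ^ k)) * v.2 ^ 2)), B2 (fracPart (p ^ k) v.1)) = 0 ∧
    deg (p ^ k) (theta (p ^ k) ε) = 0 := by
  have hp : p.Prime := Fact.out
  haveI : NeZero (p ^ k) := ⟨pow_ne_zero k hp.ne_zero⟩
  set n := p ^ k with hn
  have hnne : n ≠ 0 := NeZero.ne n
  have hn0 : (n : ℚ) ≠ 0 := Nat.cast_ne_zero.mpr hnne
  have hpQ : (p : ℚ) ≠ 0 := Nat.cast_ne_zero.mpr hp.ne_zero
  have hpk1 : ((p : ℚ)) ^ (k - 1) ≠ 0 := pow_ne_zero _ hpQ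
  have hnpk : n = p * p ^ (k - 1) := by
    rw [hn, ← pow_succ']; congr 1; omega
  -- the three basic sums
  have hA : (∑ a : ZMod n, B2 (fracPart n a)) = 1 / (6 * n) := by
    calc ∑ a : ZMod n, B2 (fracPart n a)
        = ∑ i ∈ Finset.range n, B2 ((i : ℚ) / n) := zmod_sum_eq n (fun i => B2 ((i : ℚ) / n))
      _ = 1 / (6 * n) := sum_B2_range n hnne
  have hC : (∑ b : ZMod n, if p ∣ b.val then (1 : ℚ) else 0) = (p : ℚ) ^ (k - 1) := by
    calc ∑ b : ZMod n, (if p ∣ b.val then (1 : ℚ) else 0)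
        = ∑ i ∈ Finset.range n, (if p ∣ i then (1 : ℚ) else 0) :=
          zmod_sum_eq n (fun i => if p ∣ i then (1 : ℚ) else 0)
      _ = ∑ c ∈ Finset.range (p ^ (k - 1)), (1 : ℚ) := by
          rw [hnpk]; exact sum_dvd_filter p (p ^ (k - 1)) hp.pos (fun _ => (1 : ℚ))
      _ = (p : ℚ) ^ (k - 1) := by
          rw [Finset.sum_const, Finset.card_range]; simp
  have hD : (∑ a : ZMod n, if p ∣ a.val then B2 (fracPart n a) else 0)
      = 1 / (6 * (p : ℚ) ^ (k - 1)) := by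
    calc ∑ a : ZMod n, (if p ∣ a.val then B2 (fracPart n a) else 0)
        = ∑ i ∈ Finset.range n, (if p ∣ i then B2 ((i : ℚ) / n) else 0) :=
          zmod_sum_eq n (fun i => if p ∣ i then B2 ((i : ℚ) / n) else 0)
      _ = ∑ c ∈ Finset.range (p ^ (k - 1)), B2 (((p * c : ℕ) : ℚ) / n) := by
          conv_lhs => rw [show Finset.range n = Finset.range (p * p ^ (k - 1)) by rw [hnpk]]
          exact sum_dvd_filter p (p ^ (k - 1)) hp.pos (fun i => B2 ((i : ℚ) / n))
      _ = ∑ c ∈ Finset.range (p ^ (k - 1)), B2 ((c : ℚ) / ((p ^ (k - 1) : ℕ) : ℚ)) := by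
          refine Finset.sum_congr rfl fun c _ => ?_
          congr 1
          rw [hnpk]
          push_cast
          rw [mul_div_mul_left _ _ hpQ]
      _ = 1 / (6 * ((p ^ (k - 1) : ℕ) : ℚ)) := sum_B2_range (p ^ (k - 1)) (pow_ne_zero _ hp.ne_zero)
      _ = 1 / (6 * (p : ℚ) ^ (k - 1)) := by push_cast; ring
  -- part 1
  have key : (∑ v ∈ Finset.univ.filter (fun v : ZMod n × ZMod n =>
      IsUnit (v.1 ^ 2 - (ε : ZMod n) * v.2 ^ 2)), B2 (fracPart n v.1)) = 0 := by
    rw [Finset.sum_filter, Fintype.sum_prod_type]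
    have hterm : ∀ a b : ZMod n,
        (if IsUnit (a ^ 2 - (ε : ZMod n) * b ^ 2) then B2 (fracPart n a) else 0)
          = B2 (fracPart n a)
            - (if p ∣ a.val then B2 (fracPart n a) else 0) * (if p ∣ b.val then (1 : ℚ) else 0) := by
      intro a b
      rw [if_congr (unit_iff_aux p k hk ε hε a b) rfl rfl]
      by_cases h1 : p ∣ a.val <;> by_cases h2 : p ∣ b.val <;> simp [h1, h2]
    calc ∑ a : ZMod n, ∑ b : ZMod n,
          (if IsUnit (a ^ 2 - (ε : ZMod n) * b ^ 2) then B2 (fracPart n a) else 0)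
        = ∑ a : ZMod n, ∑ b : ZMod n, (B2 (fracPart n a)
            - (if p ∣ a.val then B2 (fracPart n a) else 0)
              * (if p ∣ b.val then (1 : ℚ) else 0)) :=
          Finset.sum_congr rfl fun a _ => Finset.sum_congr rfl fun b _ => hterm a b
      _ = ∑ a : ZMod n, ((n : ℚ) * B2 (fracPart n a)
            - (if p ∣ a.val then B2 (fracPart n a) else 0)
              * ∑ b : ZMod n, (if p ∣ b.val then (1 : ℚ) else 0)) := by
          refine Finset.sum_congr rfl fun a _ => ?_
          rw [Finset.sum_sub_distrib, Finset.sum_const, ← Finset.mul_sum,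
            Finset.card_univ, ZMod.card, nsmul_eq_mul]
      _ = (n : ℚ) * (∑ a : ZMod n, B2 (fracPart n a))
            - (∑ a : ZMod n, (if p ∣ a.val then B2 (fracPart n a) else 0))
              * (∑ b : ZMod n, (if p ∣ b.val then (1 : ℚ) else 0)) := by
          rw [Finset.sum_sub_distrib, ← Finset.mul_sum, ← Finset.sum_mul]
      _ = 0 := by
          rw [hA, hC, hD]
          field_simp
          ring
  refine ⟨key, ?_⟩
  -- part 2
  have hdeg_single : ∀ (h : Hgrp n) (c : ℚ), deg n (MonoidAlgebra.single h c) = c := by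
    intro h c
    simp [deg, MonoidAlgebra.lift_single]
  have hinner : ∀ v : ZMod n × ZMod n,
      deg n (∑ u : (ZMod n)ˣ, if (u : ZMod n) = v.1 ^ 2 - (ε : ZMod n) * v.2 ^ 2 then
        MonoidAlgebra.single ((cls n u)⁻¹) (B2 (fracPart n v.1)) else 0)
      = if IsUnit (v.1 ^ 2 - (ε : ZMod n) * v.2 ^ 2) then B2 (fracPart n v.1) else 0 := by
    intro v
    rw [map_sum]
    have h1 : ∀ u : (ZMod n)ˣ,
        deg n (if (u : ZMod n) = v.1 ^ 2 - (ε : ZMod n) * v.2 ^ 2 then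
          MonoidAlgebra.single ((cls n u)⁻¹) (B2 (fracPart n v.1)) else 0)
        = if (u : ZMod n) = v.1 ^ 2 - (ε : ZMod n) * v.2 ^ 2 then B2 (fracPart n v.1) else 0 := by
      intro u
      rw [apply_ite (deg n), map_zero, hdeg_single]
    rw [Finset.sum_congr rfl fun u _ => h1 u]
    by_cases hX : IsUnit (v.1 ^ 2 - (ε : ZMod n) * v.2 ^ 2)
    · rw [if_pos hX, Finset.sum_eq_single hX.unit]
      · rw [if_pos hX.unit_spec]
      · intro u _ hu
        rw [if_neg]
        intro h
        exact hu (Units.ext (by rw [h, hX.unit_spec]))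
      · intro h; exact absurd (Finset.mem_univ _) h
    · rw [if_neg hX, Finset.sum_eq_zero]
      intro u _
      rw [if_neg]
      intro h
      exact hX (h ▸ u.isUnit)
  rw [theta, map_smul, smul_eq_mul, map_sum,
    Finset.sum_congr rfl fun v _ => hinner v, ← Finset.sum_filter, key, mul_zero]
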